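/- Let f : ℕ → ℝ, let G be a finite simple graph with ∇_r(G) ≤ f(r) for every r ∈ ℕ, let S ⊆ V(G), and let δ > 0. Let 𝒞₁,…,𝒞_t be pairwise disjoint nonempty sets of connected components of G − S such that: every component C in ⋃ᵢ 𝒞ᵢ has diameter at most δ (as an induced subgraph of G) and has at least one neighbor in S, and for all components C, C' ∈ ⋃ᵢ 𝒞ᵢ, C and C' lie in the same set 𝒞ⱼ if and only if N_S(C) = N_S(C'). Then t ≤ (4^{f(δ+1)} + 2·f(δ+1))·|S|. -/

import Mathlib

/-- `H` is a shallow minor of `G` at depth `d`. -/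
def IsShallowMinorAtDepth {V W : Type*} (G : SimpleGraph V) (d : ℕ)
    (H : SimpleGraph W) : Prop :=
  ∃ ψ : W → Set V,
    (∀ w, (ψ w).Nonempty) ∧
    (∀ w₁ w₂, w₁ ≠ w₂ → Disjoint (ψ w₁) (ψ w₂)) ∧
    (∀ w, ∃ c : ψ w, ∀ u : ψ w,
      ∃ p : (SimpleGraph.induce (ψ w) G).Walk c u, p.length ≤ d) ∧
    (∀ w₁ w₂, w₁ ≠ w₂ →
      (H.Adj w₁ w₂ ↔ ∃ v₁ ∈ ψ w₁, ∃ v₂ ∈ ψ w₂, G.Adj v₁ v₂))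

/-- The greatest reduced average density (grad) of rank `d`. -/
noncomputable def grad {V : Type*} (G : SimpleGraph V) (d : ℕ) : ℝ :=
  sSup { q : ℝ | ∃ (n : ℕ) (H : SimpleGraph (Fin n)), 0 < n ∧
    IsShallowMinorAtDepth G d H ∧ q = (H.edgeSet.ncard : ℝ) / (n : ℝ) }

/-- `N_S(C)`: vertices of `S` having at least one neighbor in `C`. -/
def nbrIn {V : Type*} (G : SimpleGraph V) (S C : Set V) : Set V :=
  {v ∈ S | ∃ u ∈ C, G.Adj v u}

/-- `C` is (the vertex set of) a connected component of `G − S`. -/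
def IsCompOf {V : Type*} (G : SimpleGraph V) (S : Set V) (C : Set V) : Prop :=
  C ⊆ Sᶜ ∧ C.Nonempty ∧ (SimpleGraph.induce C G).Connected ∧
    ∀ v ∈ Sᶜ, v ∉ C → ∀ u ∈ C, ¬ G.Adj u v

open Classical in
private lemma gradSet_bddAbove {V : Type*} [Fintype V] (G : SimpleGraph V) (r : ℕ) :
    BddAbove { q : ℝ | ∃ (n : ℕ) (H : SimpleGraph (Fin n)), 0 < n ∧
      IsShallowMinorAtDepth G r H ∧ q = (H.edgeSet.ncard : ℝ) / (n : ℝ) } := by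
  classical
  refine ⟨((Fintype.card V) ^ 2 : ℕ), fun q hq => ?_⟩
  obtain ⟨n, H, hn, ⟨ψ, hψne, hψdisj, -, -⟩, rfl⟩ := hq
  -- n ≤ card V
  have hchoice : ∀ w : Fin n, ∃ v, v ∈ ψ w := fun w => hψne w
  choose pick hpick using hchoice
  have hpickinj : Function.Injective pick := by
    intro a b hab
    by_contra hne
    exact Set.disjoint_left.1 (hψdisj a b hne) (hpick a) (hab ▸ hpick b)
  have hnV : n ≤ Fintype.card V := by
    simpa using Fintype.card_le_of_injective pick hpickinj
  -- edge count ≤ card (Sym2 (Fin n)) ≤ n^2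
  have h1 : H.edgeSet.ncard ≤ Fintype.card (Sym2 (Fin n)) := by
    have := Set.ncard_le_ncard (Set.subset_univ H.edgeSet) (Set.finite_univ)
    simpa [Set.ncard_univ] using this
  have h2 : Fintype.card (Sym2 (Fin n)) ≤ Fintype.card (Fin n × Fin n) := by
    apply Fintype.card_le_of_surjective Sym2.mk.uncurry
    intro z; exact ⟨z.out, Quot.out_eq z⟩
  have h3 : H.edgeSet.ncard ≤ (Fintype.card V)^2 := by
    calc H.edgeSet.ncard ≤ Fintype.card (Fin n × Fin n) := le_trans h1 h2
    _ = n ^ 2 := by simp [sq]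
    _ ≤ (Fintype.card V) ^ 2 := Nat.pow_le_pow_left hnV 2
  have hn1 : (1 : ℝ) ≤ (n : ℝ) := by exact_mod_cast hn
  calc (H.edgeSet.ncard : ℝ) / (n : ℝ) ≤ (H.edgeSet.ncard : ℝ) := by
        apply div_le_self (by positivity) hn1
    _ ≤ ((Fintype.card V ^ 2 : ℕ) : ℝ) := by exact_mod_cast h3

private lemma grad_nonneg' {V : Type*} [Fintype V] (G : SimpleGraph V) (r : ℕ)
    (hV : Nonempty V) : 0 ≤ grad G r := by
  obtain ⟨v⟩ := hV
  have hmem : (0:ℝ) ∈ { q : ℝ | ∃ (n : ℕ) (H : SimpleGraph (Fin n)), 0 < n ∧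
      IsShallowMinorAtDepth G r H ∧ q = (H.edgeSet.ncard : ℝ) / (n : ℝ) } := by
    refine ⟨1, ⊥, one_pos, ⟨fun _ => {v}, fun _ => ⟨v, rfl⟩,
      fun w₁ w₂ h => absurd (Subsingleton.elim w₁ w₂) h, ?_, ?_⟩, by
        simp [SimpleGraph.edgeSet_bot]⟩
    · intro w
      refine ⟨⟨v, rfl⟩, fun u => ?_⟩
      have : u = ⟨v, rfl⟩ := Subtype.ext u.2
      rw [this]
      exact ⟨SimpleGraph.Walk.nil, by simp⟩
    · intro w₁ w₂ h; exact absurd (Subsingleton.elim w₁ w₂) h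
  exact le_csSup (gradSet_bddAbove G r) hmem

/-- Key density bound: any shallow minor has few edges. -/
private lemma minor_density {V : Type*} [Fintype V] {G : SimpleGraph V} {f : ℕ → ℝ}
    (hf : ∀ r : ℕ, grad G r ≤ f r) (r : ℕ) {n : ℕ} (H : SimpleGraph (Fin n))
    (hn : 0 < n) (hH : IsShallowMinorAtDepth G r H) :
    (H.edgeSet.ncard : ℝ) ≤ f r * n := by
  have hmem : (H.edgeSet.ncard : ℝ) / (n:ℝ) ∈ { q : ℝ | ∃ (n : ℕ) (H : SimpleGraph (Fin n)), 0 < n ∧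
      IsShallowMinorAtDepth G r H ∧ q = (H.edgeSet.ncard : ℝ) / (n : ℝ) } :=
    ⟨n, H, hn, hH, rfl⟩
  have := le_trans (le_csSup (gradSet_bddAbove G r) hmem) (hf r)
  have hn' : (0:ℝ) < n := by exact_mod_cast hn
  rw [div_le_iff₀ hn'] at this
  linarith

private lemma walk_stays {V : Type*} {G : SimpleGraph V} {S C C' : Set V}
    (hC : IsCompOf G S C) (hC' : IsCompOf G S C') :
    ∀ {a b : C} (_ : (SimpleGraph.induce C G).Walk a b), (a : V) ∈ C' → (b : V) ∈ C' := by
  intro a b p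
  induction p with
  | nil => exact id
  | @cons x y z h p ih =>
    intro hx
    apply ih
    by_contra hy
    have hadj : G.Adj (x : V) (y : V) := h
    exact hC'.2.2.2 y (hC.1 y.2) hy x hx hadj

private lemma comp_eq_of_not_disjoint {V : Type*} {G : SimpleGraph V} {S C C' : Set V}
    (hC : IsCompOf G S C) (hC' : IsCompOf G S C') (h : ¬ Disjoint C C') : C = C' := by
  obtain ⟨v, hvC, hvC'⟩ := Set.not_disjoint_iff.1 h
  have key : ∀ {D D' : Set V}, IsCompOf G S D → IsCompOf G S D' →
      v ∈ D → v ∈ D' → D ⊆ D' := by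
    intro D D' hD hD' hvD hvD' u huD
    obtain ⟨p⟩ := (hD.2.2.1.preconnected) ⟨v, hvD⟩ ⟨u, huD⟩
    exact walk_stays hD hD' p hvD'
  exact Set.Subset.antisymm (key hC hC' hvC hvC') (key hC' hC hvC' hvC)

private lemma comp_disjoint {V : Type*} {G : SimpleGraph V} {S C C' : Set V}
    (hC : IsCompOf G S C) (hC' : IsCompOf G S C') (h : C ≠ C') : Disjoint C C' := by
  by_contra hd
  exact h (comp_eq_of_not_disjoint hC hC' hd)

open Classical in
/-- The key construction: a system of pairs inside `S'`, the two elements of each pair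
being `G`-neighbors of pairwise distinct components, with distinct `Sym2` images,
yields a depth-`(δ+1)` shallow minor on `S'`, whence a density bound. -/
private lemma pairs_density {V : Type*} [Fintype V] {f : ℕ → ℝ} {G : SimpleGraph V}
    (hf : ∀ r : ℕ, grad G r ≤ f r) {S : Set V} {δ : ℕ}
    {t : ℕ} {rep : Fin t → Set V}
    (hcomp : ∀ i, IsCompOf G S (rep i))
    (hdiam : ∀ i, ∀ u v : (rep i), ∃ p : (SimpleGraph.induce (rep i) G).Walk u v, p.length ≤ δ)
    (hrepinj : Function.Injective rep)
    (S' : Finset V) (hS'S : ↑S' ⊆ S)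
    (A : Finset (Fin t)) (g : Fin t → V × V)
    (hg1 : ∀ i ∈ A, (g i).1 ∈ S' ∧ (g i).2 ∈ S' ∧ (g i).1 ≠ (g i).2)
    (hgN : ∀ i ∈ A, (g i).1 ∈ nbrIn G S (rep i) ∧ (g i).2 ∈ nbrIn G S (rep i))
    (hginj : ∀ i ∈ A, ∀ j ∈ A, Sym2.mk (g i).1 (g i).2 = Sym2.mk (g j).1 (g j).2 → i = j)
    (hd0 : 0 ≤ f (δ + 1)) :
    (A.card : ℝ) ≤ f (δ + 1) * S'.card := by
  classical
  rcases A.eq_empty_or_nonempty with rfl | ⟨i₀, hi₀⟩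
  · simpa using mul_nonneg hd0 (by positivity)
  have hS'ne : S'.Nonempty := ⟨(g i₀).1, (hg1 i₀ hi₀).1⟩
  set n := S'.card with hn_def
  have hn : 0 < n := Finset.card_pos.2 hS'ne
  set e : {x // x ∈ S'} ≃ Fin n := S'.equivFin with he_def
  set σ : Fin n → V := fun w => ↑(e.symm w) with hσ_def
  have hσinj : Function.Injective σ := fun a b hab =>
    e.symm.injective (Subtype.coe_injective hab)
  have hσS' : ∀ w, σ w ∈ S' := fun w => (e.symm w).2
  set eidx : V → Fin n := fun v => if h : v ∈ S' then e ⟨v, h⟩ else ⟨0, hn⟩ with heidx_def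
  have hσeidx : ∀ v ∈ S', σ (eidx v) = v := by
    intro v hv
    simp only [heidx_def, hσ_def, dif_pos hv, Equiv.symm_apply_apply]
  set att : Fin n → Finset (Fin t) := fun w => A.filter (fun i => (g i).1 = σ w) with hatt_def
  set ψ : Fin n → Set V := fun w => insert (σ w) (⋃ i ∈ att w, rep i) with hψ_def
  have hψmem : ∀ w x, x ∈ ψ w ↔ x = σ w ∨ ∃ i ∈ att w, x ∈ rep i := by
    intro w x; simp [hψ_def]
  have hσψ : ∀ w, σ w ∈ ψ w := fun w => Set.mem_insert _ _
  have hrepψ : ∀ w i, i ∈ att w → rep i ⊆ ψ w := by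
    intro w i hi x hx
    exact (hψmem w x).2 (Or.inr ⟨i, hi, hx⟩)
  -- the minor graph
  set H : SimpleGraph (Fin n) :=
    { Adj := fun a b => a ≠ b ∧ ∃ v₁ ∈ ψ a, ∃ v₂ ∈ ψ b, G.Adj v₁ v₂
      symm := ⟨by
        rintro a b ⟨hab, v₁, h₁, v₂, h₂, hadj⟩
        exact ⟨hab.symm, v₂, h₂, v₁, h₁, hadj.symm⟩⟩
      loopless := ⟨fun a h => h.1 rfl⟩ } with hH_def
  have hminor : IsShallowMinorAtDepth G (δ + 1) H := by
    refine ⟨ψ, fun w => ⟨σ w, hσψ w⟩, ?_, ?_, fun w₁ w₂ h => ⟨fun hadj => hadj.2, fun hx => ⟨h, hx⟩⟩⟩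
    · -- disjointness
      intro w₁ w₂ hw
      rw [Set.disjoint_left]
      intro x hx₁ hx₂
      rcases (hψmem w₁ x).1 hx₁ with h₁ | ⟨i, hi, hxi⟩ <;>
        rcases (hψmem w₂ x).1 hx₂ with h₂ | ⟨j, hj, hxj⟩
      · exact hw (hσinj (h₁ ▸ h₂))
      · exact ((hcomp j).1 hxj) (hS'S (h₁ ▸ hσS' w₁))
      · exact ((hcomp i).1 hxi) (hS'S (h₂ ▸ hσS' w₂))
      · have hij : i ≠ j := by
          rintro rfl
          exact hw (hσinj (((Finset.mem_filter.1 hi).2.symm.trans (Finset.mem_filter.1 hj).2)))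
        exact Set.disjoint_left.1
          (comp_disjoint (hcomp i) (hcomp j) (fun h => hij (hrepinj h))) hxi hxj
    · -- radius ≤ δ + 1
      intro w
      refine ⟨⟨σ w, hσψ w⟩, ?_⟩
      rintro ⟨u, hu⟩
      rcases (hψmem w u).1 hu with h | ⟨i, hi, hui⟩
      · subst h
        exact ⟨SimpleGraph.Walk.nil, by simp⟩
      · have hiA : i ∈ A := (Finset.mem_filter.1 hi).1
        have hgi : (g i).1 = σ w := (Finset.mem_filter.1 hi).2
        obtain ⟨-, x, hxrep, hadjx⟩ := hgi ▸ (hgN i hiA).1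
        obtain ⟨w₀, hw₀len⟩ := hdiam i ⟨x, hxrep⟩ ⟨u, hui⟩
        have hsub : rep i ⊆ ψ w := hrepψ w i hi
        let F : SimpleGraph.induce (rep i) G →g SimpleGraph.induce (ψ w) G :=
          ⟨fun a => ⟨a.1, hsub a.2⟩, fun {a b} hab => hab⟩
        have hadj₁ : (SimpleGraph.induce (ψ w) G).Adj ⟨σ w, hσψ w⟩ ⟨x, hsub hxrep⟩ := hadjx
        refine ⟨(SimpleGraph.Walk.cons hadj₁ (w₀.map F)).copy rfl (Subtype.ext rfl), ?_⟩
        rw [SimpleGraph.Walk.length_copy, SimpleGraph.Walk.length_cons,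
          SimpleGraph.Walk.length_map]
        omega
  -- now count edges
  set φ : Fin t → Sym2 (Fin n) := fun i => Sym2.mk (eidx (g i).1) (eidx (g i).2) with hφ_def
  have hφmem : ∀ i ∈ A, φ i ∈ H.edgeSet := by
    intro i hi
    rw [SimpleGraph.mem_edgeSet]
    obtain ⟨hg1', hg2', hgne⟩ := hg1 i hi
    have hσ1 : σ (eidx (g i).1) = (g i).1 := hσeidx _ hg1'
    have hσ2 : σ (eidx (g i).2) = (g i).2 := hσeidx _ hg2'
    constructor
    · intro h465
      exact hgne (by rw [← hσ1, ← hσ2, h465])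
    · obtain ⟨-, x, hxrep, hadjx⟩ := (hgN i hi).2
      have hiatt : i ∈ att (eidx (g i).1) := Finset.mem_filter.2 ⟨hi, hσ1.symm⟩
      refine ⟨x, hrepψ _ i hiatt hxrep, (g i).2, ?_, hadjx.symm⟩
      rw [hψmem]
      exact Or.inl hσ2.symm
  have hφinj : Set.InjOn φ ↑A := by
    intro i hi j hj hij
    obtain ⟨hgi1, hgi2, -⟩ := hg1 i hi
    obtain ⟨hgj1, hgj2, -⟩ := hg1 j hj
    apply hginj i hi j hj
    rw [hφ_def] at hij
    rcases Sym2.eq_iff.1 hij with ⟨h1, h2⟩ | ⟨h1, h2⟩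
    · have e1 : (g i).1 = (g j).1 := by
        rw [← hσeidx _ hgi1, ← hσeidx _ hgj1, h1]
      have e2 : (g i).2 = (g j).2 := by
        rw [← hσeidx _ hgi2, ← hσeidx _ hgj2, h2]
      rw [show g i = g j from Prod.ext e1 e2]
    · have e1 : (g i).1 = (g j).2 := by
        rw [← hσeidx _ hgi1, ← hσeidx _ hgj2, h1]
      have e2 : (g i).2 = (g j).1 := by
        rw [← hσeidx _ hgi2, ← hσeidx _ hgj1, h2]
      rw [show g i = ((g j).2, (g j).1) from Prod.ext e1 e2]
      exact Sym2.eq_swap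
  have hcount : A.card ≤ H.edgeSet.ncard := by
    calc A.card = (A.image φ).card := (Finset.card_image_of_injOn hφinj).symm
      _ = (↑(A.image φ) : Set (Sym2 (Fin n))).ncard := (Set.ncard_coe_finset _).symm
      _ ≤ H.edgeSet.ncard := by
          apply Set.ncard_le_ncard _ (Set.toFinite _)
          intro x hx
          obtain ⟨i, hi, rfl⟩ := Finset.mem_image.1 (by exact_mod_cast hx)
          exact hφmem i hi
  calc (A.card : ℝ) ≤ (H.edgeSet.ncard : ℝ) := by exact_mod_cast hcount
    _ ≤ f (δ + 1) * n := minor_density hf (δ + 1) H hn hminor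
    _ = f (δ + 1) * S'.card := by rw [hn_def]

open Classical in
/-- In a "graph" `P` on `V` whose every induced sub-edge-set is `d`-dense at most,
the number of cliques of size `≥ 2` inside `S''` is at most `(2^k - 1)|S''|`,
provided `2d < k+1`. -/
private lemma clique_count {V : Type*} (P : Finset (Sym2 V)) (k : ℕ) (d : ℝ)
    (hk : 2 * d < (k : ℝ) + 1) :
    ∀ (S'' : Finset V),
      (∀ T ⊆ S'', (((P.filter (fun p => ∀ a ∈ p, a ∈ T)).card : ℝ)) ≤ d * T.card) →
      ((S''.powerset.filter (fun K => 2 ≤ K.card ∧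
          ∀ a ∈ K, ∀ b ∈ K, a ≠ b → Sym2.mk a b ∈ P)).card)
        ≤ (2 ^ k - 1) * S''.card := by
  classical
  suffices h : ∀ (n : ℕ) (S'' : Finset V), S''.card ≤ n →
      (∀ T ⊆ S'', (((P.filter (fun p => ∀ a ∈ p, a ∈ T)).card : ℝ)) ≤ d * T.card) →
      ((S''.powerset.filter (fun K => 2 ≤ K.card ∧
          ∀ a ∈ K, ∀ b ∈ K, a ≠ b → Sym2.mk a b ∈ P)).card)
        ≤ (2 ^ k - 1) * S''.card by
    exact fun S'' => h S''.card S'' le_rfl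
  intro n
  induction n with
  | zero =>
    intro S'' hcard _
    interval_cases hS : S''.card
    · rw [Finset.card_eq_zero] at hS
      subst hS
      rw [Finset.powerset_empty, show Finset.filter (fun K : Finset V => 2 ≤ K.card ∧
          ∀ a ∈ K, ∀ b ∈ K, a ≠ b → Sym2.mk a b ∈ P) {∅} = ∅ from ?_]
      · simp
      · rw [Finset.filter_eq_empty_iff]
        intro K hK
        rw [Finset.mem_singleton] at hK
        subst hK
        simp
  | succ n ih =>
    intro S'' hcard hdens
    rcases S''.eq_empty_or_nonempty with rfl | hS''ne
    · rw [Finset.powerset_empty, show Finset.filter (fun K : Finset V => 2 ≤ K.card ∧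
          ∀ a ∈ K, ∀ b ∈ K, a ≠ b → Sym2.mk a b ∈ P) {∅} = ∅ from ?_]
      · simp
      · rw [Finset.filter_eq_empty_iff]
        intro K hK
        rw [Finset.mem_singleton] at hK
        subst hK
        simp
    -- find a low-degree vertex v
    set Q := P.filter (fun p => ∀ a ∈ p, a ∈ S'') with hQ_def
    have hvdeg : ∃ v ∈ S'', (Q.filter (fun p => v ∈ p)).card ≤ k := by
      by_contra hcon
      push_neg at hcon
      have hsum : ∑ v ∈ S'', (Q.filter (fun p => v ∈ p)).card ≤ 2 * Q.card := by
        have step1 : ∑ v ∈ S'', (Q.filter (fun p => v ∈ p)).card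
            = ∑ p ∈ Q, (S''.filter (fun v => v ∈ p)).card := by
          simp only [Finset.card_filter]
          exact Finset.sum_comm
        rw [step1]
        have step2 : ∀ p ∈ Q, (S''.filter (fun v => v ∈ p)).card ≤ 2 := by
          intro p _
          induction p using Sym2.ind with
          | _ a b =>
            have hsub : S''.filter (fun v => v ∈ Sym2.mk a b) ⊆ insert a {b} := by
              intro x hx
              rcases Sym2.mem_iff.1 (Finset.mem_filter.1 hx).2 with h | h <;> simp [h]
            calc (S''.filter (fun v => v ∈ Sym2.mk a b)).card
                ≤ (insert a ({b} : Finset V)).card := Finset.card_le_card hsub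
              _ ≤ 2 := by
                apply le_trans (Finset.card_insert_le _ _)
                simp
        calc ∑ p ∈ Q, (S''.filter (fun v => v ∈ p)).card ≤ ∑ _p ∈ Q, 2 :=
              Finset.sum_le_sum step2
          _ = 2 * Q.card := by rw [Finset.sum_const, smul_eq_mul, mul_comm]
      have hlow : (k + 1) * S''.card ≤ ∑ v ∈ S'', (Q.filter (fun p => v ∈ p)).card := by
        calc (k + 1) * S''.card = ∑ _v ∈ S'', (k + 1) := by
              rw [Finset.sum_const, smul_eq_mul, mul_comm]
          _ ≤ ∑ v ∈ S'', (Q.filter (fun p => v ∈ p)).card :=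
              Finset.sum_le_sum (fun v hv => hcon v hv)
      have hQd : (Q.card : ℝ) ≤ d * S''.card := hdens S'' (Finset.Subset.refl _)
      have hc0 : (0 : ℝ) < (S''.card : ℝ) := by
        exact_mod_cast Finset.card_pos.2 hS''ne
      have : ((k : ℝ) + 1) * S''.card ≤ 2 * (d * S''.card) := by
        calc ((k : ℝ) + 1) * S''.card = (((k + 1) * S''.card : ℕ) : ℝ) := by push_cast; ring
          _ ≤ ((2 * Q.card : ℕ) : ℝ) := by exact_mod_cast le_trans hlow hsum
          _ = 2 * (Q.card : ℝ) := by push_cast; ring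
          _ ≤ 2 * (d * S''.card) := by linarith
      nlinarith
    obtain ⟨v, hvS, hvdeg⟩ := hvdeg
    set Nv := S''.filter (fun u => u ≠ v ∧ Sym2.mk v u ∈ P) with hNv_def
    have hNvk : Nv.card ≤ k := by
      have : Nv.card ≤ (Q.filter (fun p => v ∈ p)).card := by
        apply Finset.card_le_card_of_injOn (fun u => Sym2.mk v u)
        · intro u hu
          have hu' := Finset.mem_filter.1 hu
          have huS := hu'.1
          have hune := hu'.2.1
          have huP := hu'.2.2
          refine Finset.mem_filter.2 ⟨Finset.mem_filter.2 ⟨huP, ?_⟩, Sym2.mem_mk_left v u⟩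
          intro a ha
          rcases Sym2.mem_iff.1 ha with h | h
          · exact h ▸ hvS
          · exact h ▸ huS
        · intro a _ b _ hab
          exact Sym2.congr_right.1 hab
      omega
    -- split cliques by whether they contain v
    set cliq : Finset V → Prop := fun K => 2 ≤ K.card ∧
        ∀ a ∈ K, ∀ b ∈ K, a ≠ b → Sym2.mk a b ∈ P with hcliq_def
    have hsplit : (S''.powerset.filter cliq).card
        = ((S''.powerset.filter cliq).filter (fun K => v ∈ K)).card
          + ((S''.powerset.filter cliq).filter (fun K => v ∉ K)).card :=
      (Finset.card_filter_add_card_filter_not (fun K => v ∈ K)).symm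
    -- cliques containing v
    have hwith : ((S''.powerset.filter cliq).filter (fun K => v ∈ K)).card ≤ 2 ^ k - 1 := by
      have hinj : ∀ K ∈ (S''.powerset.filter cliq).filter (fun K => v ∈ K),
          K.erase v ∈ Nv.powerset.erase ∅ := by
        intro K hK
        obtain ⟨hK', hvK⟩ := Finset.mem_filter.1 hK
        have h1 := Finset.mem_filter.1 hK'
        have hKpow := h1.1
        have hKcard := h1.2.1
        have hKcl := h1.2.2
        have hKS : K ⊆ S'' := Finset.mem_powerset.1 hKpow
        refine Finset.mem_erase.2 ⟨?_, Finset.mem_powerset.2 ?_⟩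
        · rw [← Finset.nonempty_iff_ne_empty]
          rw [← Finset.card_pos, Finset.card_erase_of_mem hvK]
          omega
        · intro u hu
          obtain ⟨huv, huK⟩ := Finset.mem_erase.1 hu
          refine Finset.mem_filter.2 ⟨hKS huK, huv, ?_⟩
          have := hKcl v hvK u huK (fun h => huv h.symm)
          exact this
      have hinjOn : Set.InjOn (fun K : Finset V => K.erase v)
          ↑((S''.powerset.filter cliq).filter (fun K => v ∈ K)) := by
        intro K hK K' hK' hKK'
        have hvK : v ∈ K := (Finset.mem_filter.1 hK).2
        have hvK' : v ∈ K' := (Finset.mem_filter.1 hK').2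
        rw [← Finset.insert_erase hvK, ← Finset.insert_erase hvK']
        simp only at hKK'
        rw [hKK']
      calc ((S''.powerset.filter cliq).filter (fun K => v ∈ K)).card
          ≤ (Nv.powerset.erase ∅).card := Finset.card_le_card_of_injOn _ hinj hinjOn
        _ = 2 ^ Nv.card - 1 := by
            rw [Finset.card_erase_of_mem (Finset.empty_mem_powerset _), Finset.card_powerset]
        _ ≤ 2 ^ k - 1 := by
            have := Nat.pow_le_pow_right (by norm_num : 1 ≤ 2) hNvk
            omega
    -- cliques avoiding v
    have hwithout : ((S''.powerset.filter cliq).filter (fun K => v ∉ K)).card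
        ≤ (2 ^ k - 1) * (S''.erase v).card := by
      have hsub : (S''.powerset.filter cliq).filter (fun K => v ∉ K)
          ⊆ (S''.erase v).powerset.filter cliq := by
        intro K hK
        obtain ⟨hK', hvK⟩ := Finset.mem_filter.1 hK
        obtain ⟨hKpow, hcl⟩ := Finset.mem_filter.1 hK'
        refine Finset.mem_filter.2 ⟨Finset.mem_powerset.2 ?_, hcl⟩
        intro u hu
        exact Finset.mem_erase.2 ⟨fun h => hvK (h ▸ hu), Finset.mem_powerset.1 hKpow hu⟩
      calc ((S''.powerset.filter cliq).filter (fun K => v ∉ K)).card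
          ≤ ((S''.erase v).powerset.filter cliq).card := Finset.card_le_card hsub
        _ ≤ (2 ^ k - 1) * (S''.erase v).card := by
            apply ih
            · rw [Finset.card_erase_of_mem hvS]; omega
            · intro T hT
              exact hdens T (hT.trans (Finset.erase_subset _ _))
    rw [hsplit]
    have hcarderase : (S''.erase v).card = S''.card - 1 := Finset.card_erase_of_mem hvS
    have hcardpos : 1 ≤ S''.card := Finset.card_pos.2 hS''ne
    calc ((S''.powerset.filter cliq).filter (fun K => v ∈ K)).card
        + ((S''.powerset.filter cliq).filter (fun K => v ∉ K)).card
        ≤ (2 ^ k - 1) + (2 ^ k - 1) * (S''.erase v).card := Nat.add_le_add hwith hwithout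
      _ ≤ (2 ^ k - 1) * S''.card := by
          rw [hcarderase]
          have h2k : 1 ≤ 2 ^ k := Nat.one_le_two_pow
          nlinarith [Nat.sub_add_cancel hcardpos]

set_option maxHeartbeats 2000000 in
open Classical in
/-- If `∇_r(G) ≤ f(r)` for all `r` and `𝒞₁,…,𝒞_t` are pairwise disjoint nonempty
classes of connected components of `G − S`, each component of diameter at most `δ`
with a neighbor in `S`, grouped exactly by their neighborhood in `S`, then
`t ≤ (4^{f(δ+1)} + 2f(δ+1))·|S|`. -/
theorem few_neighborhood_classes
    {V : Type*} [Fintype V] (f : ℕ → ℝ) (G : SimpleGraph V)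
    (hf : ∀ r : ℕ, grad G r ≤ f r)
    (S : Set V) (δ : ℕ) (hδ : 0 < δ) (t : ℕ) (𝒞 : Fin t → Set (Set V))
    (hne : ∀ i, (𝒞 i).Nonempty)
    (hdisj : ∀ i j, i ≠ j → Disjoint (𝒞 i) (𝒞 j))
    (hcomp : ∀ i, ∀ C ∈ 𝒞 i, IsCompOf G S C)
    (hdiam : ∀ i, ∀ C ∈ 𝒞 i, ∀ u v : C,
      ∃ p : (SimpleGraph.induce C G).Walk u v, p.length ≤ δ)
    (hnbr : ∀ i, ∀ C ∈ 𝒞 i, (nbrIn G S C).Nonempty)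
    (hgroup : ∀ i j, ∀ C ∈ 𝒞 i, ∀ C' ∈ 𝒞 j, (i = j ↔ nbrIn G S C = nbrIn G S C')) :
    (t : ℝ) ≤ ((4 : ℝ) ^ (f (δ + 1)) + 2 * f (δ + 1)) * (S.ncard : ℝ) := by
  classical
  set d := f (δ + 1) with hd_def
  rcases isEmpty_or_nonempty V with hV | hV
  · -- V is empty: t = 0 and S = ∅
    have ht : t = 0 := by
      by_contra h
      obtain ⟨C, hC⟩ := hne ⟨0, Nat.pos_of_ne_zero h⟩
      obtain ⟨v, -⟩ := (hcomp _ C hC).2.1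
      exact hV.elim v
    have hS : S = ∅ := Set.eq_empty_of_isEmpty S
    simp [ht, hS]
  have hd0 : 0 ≤ d := le_trans (grad_nonneg' G (δ + 1) hV) (hf (δ + 1))
  -- pick representative components
  choose rep hrep using hne
  have hrepC : ∀ i, IsCompOf G S (rep i) := fun i => hcomp i (rep i) (hrep i)
  have hrepdiam : ∀ i, ∀ u v : (rep i),
      ∃ p : (SimpleGraph.induce (rep i) G).Walk u v, p.length ≤ δ :=
    fun i => hdiam i (rep i) (hrep i)
  set N : Fin t → Set V := fun i => nbrIn G S (rep i) with hN_def
  have hNdist : ∀ i j, N i = N j → i = j := by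
    intro i j hNij
    exact (hgroup i j (rep i) (hrep i) (rep j) (hrep j)).2 hNij
  have hrepinj : Function.Injective rep := by
    intro i j hij
    apply hNdist
    rw [hN_def]
    simp only
    rw [hij]
  have hNne : ∀ i, (N i).Nonempty := fun i => hnbr i (rep i) (hrep i)
  have hNS : ∀ i, N i ⊆ S := fun i x hx => hx.1
  -- finset versions
  set Sfin : Finset V := (Set.toFinite S).toFinset with hSfin_def
  have hSfincoe : (Sfin : Set V) = S := Set.Finite.coe_toFinset _
  have hSfincard : (Sfin.card : ℝ) = (S.ncard : ℝ) := by
    rw [Set.ncard_eq_toFinset_card S (Set.toFinite S)]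
  set 𝒩 : Fin t → Finset V := fun i => (Set.toFinite (N i)).toFinset with h𝒩_def
  have h𝒩mem : ∀ i x, x ∈ 𝒩 i ↔ x ∈ N i := fun i x => Set.Finite.mem_toFinset _
  have h𝒩S : ∀ i, 𝒩 i ⊆ Sfin := by
    intro i x hx
    rw [← hSfincoe] at hNS
    exact hNS i ((h𝒩mem i x).1 hx)
  have h𝒩inj : ∀ i j, 𝒩 i = 𝒩 j → i = j := by
    intro i j hij
    apply hNdist
    rw [← Set.Finite.coe_toFinset (Set.toFinite (N i)), ← Set.Finite.coe_toFinset (Set.toFinite (N j))]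
    exact congrArg _ hij
  -- matchings between classes and pairs
  set isM : Finset (Fin t × Sym2 V) → Prop := fun M =>
    (∀ x ∈ M, ¬ x.2.IsDiag ∧ ∀ a ∈ x.2, a ∈ N x.1) ∧
    (∀ x ∈ M, ∀ y ∈ M, (x.1 = y.1 ∨ x.2 = y.2) → x = y) with hisM_def
  obtain ⟨M, hMmem, hMmax⟩ := Finset.exists_maximal
    (s := (Finset.univ : Finset (Finset (Fin t × Sym2 V))).filter isM)
    ⟨∅, Finset.mem_filter.2 ⟨Finset.mem_univ _,
      ⟨fun x hx => absurd hx (Finset.notMem_empty x),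
       fun x hx => absurd hx (Finset.notMem_empty x)⟩⟩⟩
  have hM : isM M := (Finset.mem_filter.1 hMmem).2
  have hMmax' : ∀ M', isM M' → ¬ M ⊂ M' := fun M' h hcon =>
    hcon.2 (hMmax (Finset.mem_filter.2 ⟨Finset.mem_univ _, h⟩) hcon.1)
  set Mcl := M.image Prod.fst with hMcl_def
  set Mpr := M.image Prod.snd with hMpr_def
  -- the pair-choice function
  set g : Fin t → V × V := fun i =>
    if h : ∃ p, (i, p) ∈ M then (Classical.choose h).out else (hV.some, hV.some) with hg_def
  have hgspec : ∀ i p, (i, p) ∈ M →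
      Sym2.mk (g i).1 (g i).2 = p ∧ (g i).1 ∈ p ∧ (g i).2 ∈ p ∧ (g i).1 ≠ (g i).2 := by
    intro i p hip
    have hex : ∃ q, (i, q) ∈ M := ⟨p, hip⟩
    have hq := Classical.choose_spec hex
    have hcp : Classical.choose hex = p := by
      have := hM.2 _ hq _ hip (Or.inl rfl)
      exact congrArg Prod.snd this
    have hgi : g i = p.out := by
      rw [hg_def]
      simp only
      rw [dif_pos hex, hcp]
    have hmk : Sym2.mk (g i).1 (g i).2 = p := by rw [hgi]; exact Quot.out_eq p
    refine ⟨hmk, by rw [hgi]; exact Sym2.out_fst_mem p, by rw [hgi]; exact Sym2.out_snd_mem p, ?_⟩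
    intro h12
    have hdiag : p.IsDiag := by
      rw [← hmk]
      exact Sym2.mk_isDiag_iff.2 h12
    exact (hM.1 _ hip).1 hdiag
  have hgN' : ∀ i p, (i, p) ∈ M → (g i).1 ∈ N i ∧ (g i).2 ∈ N i := by
    intro i p hip
    obtain ⟨-, h1, h2, -⟩ := hgspec i p hip
    exact ⟨(hM.1 _ hip).2 _ h1, (hM.1 _ hip).2 _ h2⟩
  -- generic density bound for sub-collections of the matching
  have hdens : ∀ (T : Finset V), ↑T ⊆ S → ∀ (M' : Finset (Fin t × Sym2 V)), M' ⊆ M →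
      (∀ x ∈ M', ∀ a ∈ x.2, a ∈ T) → ((M'.card : ℝ)) ≤ d * T.card := by
    intro T hTS M' hM'M hM'T
    have hcardeq : M'.card = (M'.image Prod.fst).card := by
      rw [Finset.card_image_of_injOn]
      intro x hx y hy hxy
      exact hM.2 x (hM'M hx) y (hM'M hy) (Or.inl hxy)
    rw [hcardeq]
    apply pairs_density hf hrepC hrepdiam hrepinj T hTS (M'.image Prod.fst) g _ _ _ hd0
    · -- hg1
      intro i hi
      obtain ⟨x, hx, rfl⟩ := Finset.mem_image.1 hi
      have hxM : (x.1, x.2) ∈ M := hM'M hx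
      obtain ⟨hmk, h1, h2, hne12⟩ := hgspec x.1 x.2 hxM
      have hsub : ∀ a ∈ x.2, a ∈ T := hM'T x hx
      exact ⟨hsub _ h1, hsub _ h2, hne12⟩
    · -- hgN
      intro i hi
      obtain ⟨x, hx, rfl⟩ := Finset.mem_image.1 hi
      exact hgN' x.1 x.2 (hM'M hx)
    · -- hginj
      intro i hi j hj hij
      obtain ⟨x, hx, rfl⟩ := Finset.mem_image.1 hi
      obtain ⟨y, hy, rfl⟩ := Finset.mem_image.1 hj
      have hxM : (x.1, x.2) ∈ M := hM'M hx
      have hyM : (y.1, y.2) ∈ M := hM'M hy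
      have hx2 : Sym2.mk (g x.1).1 (g x.1).2 = x.2 := (hgspec x.1 x.2 hxM).1
      have hy2 : Sym2.mk (g y.1).1 (g y.1).2 = y.2 := (hgspec y.1 y.2 hyM).1
      have : (x.1, x.2) = (y.1, y.2) :=
        hM.2 _ hxM _ hyM (Or.inr (by rw [← hx2, ← hy2, hij]))
      exact congrArg Prod.fst this
  -- bound on the matching size
  have hMbound : ((M.card : ℝ)) ≤ d * Sfin.card := by
    apply hdens Sfin hSfincoe.le M (Finset.Subset.refl M)
    intro x hx a ha
    rw [hSfin_def, Set.Finite.mem_toFinset]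
    exact hNS x.1 ((hM.1 x hx).2 a ha)
  set k := ⌊2 * d⌋₊ with hk_def
  -- every subset of S traces at most d |T| matched pairs
  have hTdens : ∀ T ⊆ Sfin,
      (((Mpr.filter (fun p => ∀ a ∈ p, a ∈ T)).card : ℝ)) ≤ d * T.card := by
    intro T hT
    set M' := M.filter (fun x => ∀ a ∈ x.2, a ∈ T) with hM'_def
    have hcardeq : (Mpr.filter (fun p => ∀ a ∈ p, a ∈ T)) = M'.image Prod.snd := by
      ext p
      simp only [Finset.mem_filter, hMpr_def, Finset.mem_image, hM'_def]
      constructor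
      · rintro ⟨⟨x, hx, rfl⟩, hp⟩
        exact ⟨x, ⟨hx, hp⟩, rfl⟩
      · rintro ⟨x, ⟨hx, hp⟩, rfl⟩
        exact ⟨⟨x, hx, rfl⟩, hp⟩
    rw [hcardeq, Finset.card_image_of_injOn (fun x hx y hy hxy =>
      hM.2 x (Finset.mem_filter.1 hx).1 y (Finset.mem_filter.1 hy).1 (Or.inr hxy))]
    apply hdens T (by rw [← hSfincoe]; exact_mod_cast hT) M' (Finset.filter_subset _ _)
    intro x hx
    exact (Finset.mem_filter.1 hx).2
  -- unmatched classes with at least two neighbours: their traces are cliques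
  set U := Finset.univ.filter (fun i : Fin t => i ∉ Mcl ∧ 2 ≤ (𝒩 i).card) with hU_def
  have hUcl : ∀ i ∈ U, ∀ a ∈ 𝒩 i, ∀ b ∈ 𝒩 i, a ≠ b → Sym2.mk a b ∈ Mpr := by
    intro i hi a ha b hb hab
    obtain ⟨-, hiM, -⟩ := Finset.mem_filter.1 hi
    by_contra hnot
    have hnew : (i, Sym2.mk a b) ∉ M := by
      intro h
      exact hiM (Finset.mem_image.2 ⟨_, h, rfl⟩)
    have hM' : isM (insert (i, Sym2.mk a b) M) := by
      constructor
      · intro x hx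
        rcases Finset.mem_insert.1 hx with rfl | hx
        · refine ⟨fun hdg => hab (Sym2.mk_isDiag_iff.1 hdg), ?_⟩
          intro c hc
          rcases Sym2.mem_iff.1 hc with rfl | rfl
          · exact (h𝒩mem i c).1 ha
          · exact (h𝒩mem i c).1 hb
        · exact hM.1 x hx
      · intro x hx y hy hxy
        rcases Finset.mem_insert.1 hx with rfl | hx <;>
          rcases Finset.mem_insert.1 hy with h' | hy
        · rw [h']
        · exfalso
          rcases hxy with h1 | h2
          · exact hiM (Finset.mem_image.2 ⟨y, hy, h1.symm⟩)
          · exact hnot (Finset.mem_image.2 ⟨y, hy, h2.symm⟩)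
        · exfalso
          subst h'
          rcases hxy with h1 | h2
          · exact hiM (Finset.mem_image.2 ⟨x, hx, h1⟩)
          · exact hnot (Finset.mem_image.2 ⟨x, hx, h2⟩)
        · exact hM.2 x hx y hy hxy
    exact hMmax' _ hM' (Finset.ssubset_insert hnew)
  -- count unmatched classes via cliques
  have hUbound : U.card ≤ (2 ^ k - 1) * Sfin.card := by
    have hclq := clique_count Mpr k d
      (by exact_mod_cast Nat.lt_floor_add_one (2 * d)) Sfin
      (by intro T hT; rw [Finset.filter_congr_decidable]; exact hTdens T hT)
    rw [Finset.filter_congr_decidable] at hclq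
    have hUsub : ∀ i ∈ U, 𝒩 i ∈ Sfin.powerset.filter (fun K => 2 ≤ K.card ∧
        ∀ a ∈ K, ∀ b ∈ K, a ≠ b → Sym2.mk a b ∈ Mpr) := by
      intro i hi
      have hi' := Finset.mem_filter.1 hi
      rw [Finset.mem_filter]
      exact ⟨Finset.mem_powerset.2 (h𝒩S i), hi'.2.2, hUcl i hi⟩
    calc U.card ≤ (Sfin.powerset.filter (fun K => 2 ≤ K.card ∧
          ∀ a ∈ K, ∀ b ∈ K, a ≠ b → Sym2.mk a b ∈ Mpr)).card :=
        Finset.card_le_card_of_injOn 𝒩 hUsub (fun i _ j _ hij => h𝒩inj i j hij)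
      _ ≤ (2 ^ k - 1) * Sfin.card := hclq
  -- classes with a single neighbour
  set A1 := Finset.univ.filter (fun i : Fin t => (𝒩 i).card ≤ 1) with hA1_def
  have hone : ∀ i ∈ A1, ∃ a, 𝒩 i = {a} := by
    intro i hi
    have hcard : (𝒩 i).card ≤ 1 := (Finset.mem_filter.1 hi).2
    have hpos : 0 < (𝒩 i).card := by
      rw [Finset.card_pos]
      obtain ⟨x, hx⟩ := hNne i
      exact ⟨x, (h𝒩mem i x).2 hx⟩
    exact Finset.card_eq_one.1 (le_antisymm hcard hpos)
  have hkey : ∀ (s : Finset V) (h : ∃ a, s = {a}),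
      s = {(if h' : ∃ a, s = {a} then h'.choose else hV.some)} := by
    intro s h
    rw [dif_pos h]
    exact h.choose_spec
  have hA1bound : A1.card ≤ Sfin.card := by
    apply Finset.card_le_card_of_injOn
      (fun s => if h' : ∃ a, 𝒩 s = {a} then h'.choose else hV.some)
    · intro i hi
      have h1 : ({(if h' : ∃ a, 𝒩 i = {a} then h'.choose else hV.some)} : Finset V) ⊆ Sfin := by
        rw [← hkey (𝒩 i) (hone i hi)]
        exact h𝒩S i
      exact h1 (Finset.mem_singleton_self _)
    · intro i hi j hj hij
      simp only at hij
      apply h𝒩inj i j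
      exact (hkey (𝒩 i) (hone i hi)).trans
        ((by rw [hij] : ({(if h' : ∃ a, 𝒩 i = {a} then h'.choose else hV.some)} : Finset V)
            = {(if h' : ∃ a, 𝒩 j = {a} then h'.choose else hV.some)}).trans
          (hkey (𝒩 j) (hone j hj)).symm)
  -- partition of all classes
  have hpart : (Finset.univ : Finset (Fin t)) ⊆ A1 ∪ Mcl ∪ U := by
    intro i _
    by_cases h1 : (𝒩 i).card ≤ 1
    · exact Finset.mem_union.2 (Or.inl (Finset.mem_union.2 (Or.inl
        (Finset.mem_filter.2 ⟨Finset.mem_univ _, h1⟩))))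
    · by_cases h2 : i ∈ Mcl
      · exact Finset.mem_union.2 (Or.inl (Finset.mem_union.2 (Or.inr h2)))
      · exact Finset.mem_union.2 (Or.inr (Finset.mem_filter.2
          ⟨Finset.mem_univ _, h2, by omega⟩))
  have htcard : t ≤ A1.card + Mcl.card + U.card := by
    calc t = (Finset.univ : Finset (Fin t)).card := by simp
      _ ≤ (A1 ∪ Mcl ∪ U).card := Finset.card_le_card hpart
      _ ≤ (A1 ∪ Mcl).card + U.card := Finset.card_union_le _ _
      _ ≤ A1.card + Mcl.card + U.card := Nat.add_le_add_right (Finset.card_union_le _ _) _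
  have hMclM : Mcl.card ≤ M.card := Finset.card_image_le
  -- final arithmetic
  have h2k4d : ((2 ^ k : ℕ) : ℝ) ≤ (4 : ℝ) ^ d := by
    have hfloor : ((k : ℝ)) ≤ 2 * d := Nat.floor_le (by positivity)
    have h1 : ((2 : ℝ)) ^ ((k : ℕ) : ℝ) ≤ (2 : ℝ) ^ (2 * d) :=
      (Real.rpow_le_rpow_left_iff (by norm_num : (1:ℝ) < 2)).2 hfloor
    rw [Real.rpow_natCast] at h1
    have h22 : (2 : ℝ) ^ (2 : ℝ) = 4 := by
      have h0 := Real.rpow_natCast (2 : ℝ) 2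
      norm_num at h0
      convert h0 using 2 <;> norm_num
    have h2 : (2 : ℝ) ^ (2 * d) = (4 : ℝ) ^ d := by
      rw [Real.rpow_mul (by norm_num : (0:ℝ) ≤ 2), h22]
    rw [← h2]
    exact_mod_cast h1
  have h2kge1 : 1 ≤ 2 ^ k := Nat.one_le_two_pow
  have hUcast : ((U.card : ℝ)) ≤ (((2:ℝ) ^ k) - 1) * Sfin.card := by
    have := hUbound
    have hcast : (((2 ^ k - 1) * Sfin.card : ℕ) : ℝ) = (((2:ℝ) ^ k) - 1) * Sfin.card := by
      push_cast [Nat.cast_sub h2kge1]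
      ring
    calc ((U.card : ℝ)) ≤ (((2 ^ k - 1) * Sfin.card : ℕ) : ℝ) := by exact_mod_cast this
      _ = _ := hcast
  have hScard0 : (0:ℝ) ≤ (Sfin.card : ℝ) := Nat.cast_nonneg _
  have h2kr : ((2:ℝ) ^ k) ≤ (4 : ℝ) ^ d := by
    calc ((2:ℝ) ^ k) = ((2 ^ k : ℕ) : ℝ) := by push_cast; ring
      _ ≤ (4 : ℝ) ^ d := h2k4d
  calc (t : ℝ) ≤ ((A1.card + Mcl.card + U.card : ℕ) : ℝ) := by exact_mod_cast htcard
    _ = (A1.card : ℝ) + (Mcl.card : ℝ) + (U.card : ℝ) := by push_cast; ring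
    _ ≤ (Sfin.card : ℝ) + d * Sfin.card + (((2:ℝ) ^ k) - 1) * Sfin.card := by
        have h1 : (A1.card : ℝ) ≤ (Sfin.card : ℝ) := by exact_mod_cast hA1bound
        have h2 : (Mcl.card : ℝ) ≤ d * Sfin.card := by
          refine le_trans ?_ hMbound
          exact_mod_cast hMclM
        linarith
    _ = (d + (2:ℝ) ^ k) * Sfin.card := by ring
    _ ≤ ((4 : ℝ) ^ d + 2 * d) * Sfin.card := by nlinarith
    _ = ((4 : ℝ) ^ d + 2 * d) * (S.ncard : ℝ) := by rw [hSfincard]
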